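/- For d ≥ 1 and ρ = 2 incomparable points in (0,1)^d with no coordinate ties, the possible values for the number γ of minimal elements of the record-setting region are exactly the numbers of the form γ = d + a(d - a) with 1 ≤ a ≤ ⌊d/2⌋. In particular the minimum possible value is 2d - 1 and the maximum is d + ⌊d/2⌋⌈d/2⌉. -/
import Mathlib


/-- The record-setting region of the points `r 0, …, r (ρ-1)` within `[0,1)^d`. -/
def recordSet {d ρ : ℕ} (r : Fin ρ → Fin d → ℝ) : Set (Fin d → ℝ) :=
  {x | (∀ j, x j ∈ Set.Ico (0:ℝ) 1) ∧ ∀ i, ¬ ∀ j, x j < r i j}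

/-- The generators: minimal elements of the record-setting region. -/
def generators {d ρ : ℕ} (r : Fin ρ → Fin d → ℝ) : Set (Fin d → ℝ) :=
  {g | g ∈ recordSet r ∧ ∀ y ∈ recordSet r, y ≤ g → y = g}

namespace GenTwoAux

variable {d : ℕ}

/-- single-coordinate candidate minimal point -/
def mpt (r : Fin 2 → Fin d → ℝ) (j : Fin d) : Fin d → ℝ :=
  fun k => if k = j then max (r 0 j) (r 1 j) else 0

/-- two-coordinate candidate minimal point -/
def ppt (r : Fin 2 → Fin d → ℝ) (j k : Fin d) : Fin d → ℝ :=
  fun l => if l = j then r 0 j else if l = k then r 1 k else 0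

variable {r : Fin 2 → Fin d → ℝ}

lemma mpt_apply_self (j : Fin d) : mpt r j j = max (r 0 j) (r 1 j) := if_pos rfl

lemma mpt_apply_ne {j k : Fin d} (h : k ≠ j) : mpt r j k = 0 := if_neg h

lemma ppt_apply_fst (j k : Fin d) : ppt r j k j = r 0 j := if_pos rfl

lemma ppt_apply_snd {j k : Fin d} (h : k ≠ j) : ppt r j k k = r 1 k := by
  unfold ppt; rw [if_neg h, if_pos rfl]

lemma ppt_apply_other {j k l : Fin d} (h1 : l ≠ j) (h2 : l ≠ k) : ppt r j k l = 0 := by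
  unfold ppt; rw [if_neg h1, if_neg h2]

lemma not_lt_all (i : Fin 2) {x : Fin d → ℝ} (j : Fin d) (h : r i j ≤ x j) :
    ¬ ∀ l, x l < r i l := fun hall => absurd (hall j) (not_lt.2 h)

lemma exists_ge {x : Fin d → ℝ} (hx : x ∈ recordSet r) (i : Fin 2) :
    ∃ j, r i j ≤ x j := by
  have := hx.2 i
  push_neg at this
  exact this

lemma mpt_mem (hmem : ∀ i j, r i j ∈ Set.Ioo (0:ℝ) 1) (j : Fin d) :
    mpt r j ∈ recordSet r := by
  constructor
  · intro k
    rw [Set.mem_Ico]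
    rcases eq_or_ne k j with rfl | hk
    · rw [mpt_apply_self]
      exact ⟨le_max_of_le_left (hmem 0 k).1.le, max_lt (hmem 0 k).2 (hmem 1 k).2⟩
    · rw [mpt_apply_ne hk]; norm_num
  · intro i
    apply not_lt_all i j
    rw [mpt_apply_self]
    fin_cases i
    · exact le_max_left _ _
    · exact le_max_right _ _

lemma mpt_gen (hmem : ∀ i j, r i j ∈ Set.Ioo (0:ℝ) 1) (j : Fin d) :
    mpt r j ∈ generators r := by
  refine ⟨mpt_mem hmem j, fun y hy hle => ?_⟩
  have hzero : ∀ k, k ≠ j → y k = 0 := by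
    intro k hk
    have h1 : y k ≤ 0 := by
      have := hle k; rwa [mpt_apply_ne hk] at this
    exact le_antisymm h1 (hy.1 k).1
  have key : ∀ i : Fin 2, r i j ≤ y j := by
    intro i
    obtain ⟨l, hl⟩ := exists_ge hy i
    rcases eq_or_ne l j with rfl | hlj
    · exact hl
    · exact absurd hl (not_le.2 (by rw [hzero l hlj]; exact (hmem i l).1))
  funext k
  rcases eq_or_ne k j with rfl | hk
  · refine le_antisymm (hle k) ?_
    rw [mpt_apply_self]
    exact max_le (key 0) (key 1)
  · rw [hzero k hk, mpt_apply_ne hk]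

lemma ppt_mem (hmem : ∀ i j, r i j ∈ Set.Ioo (0:ℝ) 1) {j k : Fin d} (hjk : j ≠ k) :
    ppt r j k ∈ recordSet r := by
  constructor
  · intro l
    rw [Set.mem_Ico]
    rcases eq_or_ne l j with rfl | hl
    · rw [ppt_apply_fst]
      exact ⟨(hmem 0 l).1.le, (hmem 0 l).2⟩
    rcases eq_or_ne l k with rfl | hl'
    · rw [ppt_apply_snd (Ne.symm hjk)]
      exact ⟨(hmem 1 l).1.le, (hmem 1 l).2⟩
    · rw [ppt_apply_other hl hl']; norm_num
  · intro i
    fin_cases i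
    · exact not_lt_all 0 j (le_of_eq (ppt_apply_fst j k).symm)
    · exact not_lt_all 1 k (le_of_eq (ppt_apply_snd (Ne.symm hjk)).symm)

lemma ppt_gen (hmem : ∀ i j, r i j ∈ Set.Ioo (0:ℝ) 1) {j k : Fin d}
    (hA : r 0 j < r 1 j) (hB : r 1 k < r 0 k) :
    ppt r j k ∈ generators r := by
  have hjk : j ≠ k := by rintro rfl; exact absurd hB (not_lt.2 hA.le)
  refine ⟨ppt_mem hmem hjk, fun y hy hle => ?_⟩
  have hzero : ∀ l, l ≠ j → l ≠ k → y l = 0 := by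
    intro l h1 h2
    have : y l ≤ 0 := by
      have := hle l; rwa [ppt_apply_other h1 h2] at this
    exact le_antisymm this (hy.1 l).1
  have hyj : y j ≤ r 0 j := by
    have := hle j; rwa [ppt_apply_fst] at this
  have hyk : y k ≤ r 1 k := by
    have := hle k; rwa [ppt_apply_snd (Ne.symm hjk)] at this
  have h0 : r 0 j ≤ y j := by
    obtain ⟨l, hl⟩ := exists_ge hy 0
    rcases eq_or_ne l j with rfl | hlj
    · exact hl
    rcases eq_or_ne l k with rfl | hlk
    · exact absurd hl (not_le.2 (lt_of_le_of_lt hyk hB))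
    · exact absurd hl (not_le.2 (by rw [hzero l hlj hlk]; exact (hmem 0 l).1))
  have h1 : r 1 k ≤ y k := by
    obtain ⟨l, hl⟩ := exists_ge hy 1
    rcases eq_or_ne l k with rfl | hlk
    · exact hl
    rcases eq_or_ne l j with rfl | hlj
    · exact absurd hl (not_le.2 (lt_of_le_of_lt hyj hA))
    · exact absurd hl (not_le.2 (by rw [hzero l hlj hlk]; exact (hmem 1 l).1))
  funext l
  rcases eq_or_ne l j with rfl | hlj
  · rw [ppt_apply_fst]; exact le_antisymm hyj h0
  rcases eq_or_ne l k with rfl | hlk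
  · rw [ppt_apply_snd (Ne.symm hjk)]; exact le_antisymm hyk h1
  · rw [hzero l hlj hlk, ppt_apply_other hlj hlk]

lemma gen_eq (hmem : ∀ i j, r i j ∈ Set.Ioo (0:ℝ) 1)
    (hne : ∀ j, r 0 j ≠ r 1 j) :
    generators r =
      ↑((Finset.univ.image (mpt r)) ∪
        (((Finset.univ.filter fun j : Fin d => r 0 j < r 1 j) ×ˢ
          (Finset.univ.filter fun k : Fin d => r 1 k < r 0 k)).image
            (fun p => ppt r p.1 p.2))) := by
  ext g
  rw [Finset.mem_coe, Finset.mem_union]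
  constructor
  · intro hg
    obtain ⟨j, hj⟩ := exists_ge hg.1 0
    obtain ⟨k, hk⟩ := exists_ge hg.1 1
    rcases eq_or_ne j k with rfl | hjk
    · left
      refine Finset.mem_image.2 ⟨j, Finset.mem_univ j, ?_⟩
      apply hg.2 (mpt r j) (mpt_mem hmem j)
      intro l
      rcases eq_or_ne l j with rfl | hl
      · rw [mpt_apply_self]
        exact max_le hj hk
      · rw [mpt_apply_ne hl]
        exact (hg.1.1 l).1
    · have hgp : ppt r j k = g := by
        apply hg.2 (ppt r j k) (ppt_mem hmem hjk)
        intro l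
        rcases eq_or_ne l j with rfl | hl
        · rw [ppt_apply_fst]; exact hj
        rcases eq_or_ne l k with rfl | hl'
        · rw [ppt_apply_snd (Ne.symm hjk)]; exact hk
        · rw [ppt_apply_other hl hl']
          exact (hg.1.1 l).1
      have hAj : r 0 j < r 1 j := by
        rcases (hne j).lt_or_gt with h | h
        · exact h
        · exfalso
          have hm : mpt r j = g := by
            apply hg.2 (mpt r j) (mpt_mem hmem j)
            intro l
            rcases eq_or_ne l j with rfl | hl
            · rw [mpt_apply_self, max_eq_left h.le, ← hgp, ppt_apply_fst]
            · rw [mpt_apply_ne hl]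
              exact (hg.1.1 l).1
          have heval : mpt r j k = ppt r j k k := by rw [hm, hgp]
          rw [mpt_apply_ne (Ne.symm hjk), ppt_apply_snd (Ne.symm hjk)] at heval
          exact absurd heval.symm (ne_of_gt (hmem 1 k).1)
      have hBk : r 1 k < r 0 k := by
        rcases (hne k).lt_or_gt with h | h
        · exfalso
          have hm : mpt r k = g := by
            apply hg.2 (mpt r k) (mpt_mem hmem k)
            intro l
            rcases eq_or_ne l k with rfl | hl
            · rw [mpt_apply_self, max_eq_right h.le, ← hgp, ppt_apply_snd (Ne.symm hjk)]
            · rw [mpt_apply_ne hl]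
              exact (hg.1.1 l).1
          have heval : mpt r k j = ppt r j k j := by rw [hm, hgp]
          rw [mpt_apply_ne hjk, ppt_apply_fst] at heval
          exact absurd heval.symm (ne_of_gt (hmem 0 j).1)
        · exact h
      right
      refine Finset.mem_image.2 ⟨(j, k), ?_, hgp⟩
      rw [Finset.mem_product]
      exact ⟨Finset.mem_filter.2 ⟨Finset.mem_univ j, hAj⟩,
        Finset.mem_filter.2 ⟨Finset.mem_univ k, hBk⟩⟩
  · intro h
    rcases h with h | h
    · obtain ⟨j, -, rfl⟩ := Finset.mem_image.1 h
      exact mpt_gen hmem j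
    · obtain ⟨⟨j, k⟩, hp, rfl⟩ := Finset.mem_image.1 h
      rw [Finset.mem_product] at hp
      exact ppt_gen hmem (Finset.mem_filter.1 hp.1).2 (Finset.mem_filter.1 hp.2).2

lemma gen_ncard (hmem : ∀ i j, r i j ∈ Set.Ioo (0:ℝ) 1)
    (hne : ∀ j, r 0 j ≠ r 1 j) :
    (generators r).ncard =
      d + (Finset.univ.filter fun j : Fin d => r 0 j < r 1 j).card *
          (Finset.univ.filter fun k : Fin d => r 1 k < r 0 k).card := by
  rw [gen_eq hmem hne, Set.ncard_coe_finset]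
  have hmpt_inj : Function.Injective (mpt r) := by
    intro j j' h
    by_contra hjj
    have heval := congrFun h j
    rw [mpt_apply_self, mpt_apply_ne (fun hc => hjj hc)] at heval
    exact absurd (max_le_iff.1 heval.le).1 (not_le.2 (hmem 0 j).1)
  have hcard1 : (Finset.univ.image (mpt r)).card = d := by
    rw [Finset.card_image_of_injective _ hmpt_inj, Finset.card_univ, Fintype.card_fin]
  have hppt_inj : Set.InjOn (fun p : Fin d × Fin d => ppt r p.1 p.2)
      ↑((Finset.univ.filter fun j : Fin d => r 0 j < r 1 j) ×ˢ
        (Finset.univ.filter fun k : Fin d => r 1 k < r 0 k)) := by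
    rintro ⟨j, k⟩ hjk ⟨j', k'⟩ hjk' h
    rw [Finset.mem_coe, Finset.mem_product] at hjk hjk'
    have hA := (Finset.mem_filter.1 hjk.1).2
    have hB := (Finset.mem_filter.1 hjk.2).2
    have hA' := (Finset.mem_filter.1 hjk'.1).2
    have hB' := (Finset.mem_filter.1 hjk'.2).2
    have hdjk : j ≠ k := by rintro rfl; exact absurd hB (not_lt.2 hA.le)
    have hdjk' : j' ≠ k' := by rintro rfl; exact absurd hB' (not_lt.2 hA'.le)
    have hj : j = j' := by
      by_contra hjj
      have heval := congrFun h j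
      simp only at heval
      rw [ppt_apply_fst] at heval
      rcases eq_or_ne j k' with rfl | hjk2
      · rw [ppt_apply_snd (Ne.symm hdjk')] at heval
        exact absurd hB' (not_lt.2 (le_of_lt (heval ▸ hA)))
      · rw [ppt_apply_other hjj hjk2] at heval
        exact absurd heval (ne_of_gt (hmem 0 j).1)
    subst hj
    have hk : k = k' := by
      by_contra hkk
      have heval := congrFun h k
      simp only at heval
      rw [ppt_apply_snd (Ne.symm hdjk),
        ppt_apply_other (Ne.symm hdjk) hkk] at heval
      exact absurd heval (ne_of_gt (hmem 1 k).1)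
    rw [hk]
  have hcard2 :
      ((((Finset.univ.filter fun j : Fin d => r 0 j < r 1 j) ×ˢ
        (Finset.univ.filter fun k : Fin d => r 1 k < r 0 k))).image
          (fun p => ppt r p.1 p.2)).card =
      (Finset.univ.filter fun j : Fin d => r 0 j < r 1 j).card *
      (Finset.univ.filter fun k : Fin d => r 1 k < r 0 k).card := by
    rw [Finset.card_image_of_injOn hppt_inj, Finset.card_product]
  have hdisj : Disjoint (Finset.univ.image (mpt r))
      ((((Finset.univ.filter fun j : Fin d => r 0 j < r 1 j) ×ˢ
        (Finset.univ.filter fun k : Fin d => r 1 k < r 0 k))).image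
          (fun p => ppt r p.1 p.2)) := by
    rw [Finset.disjoint_left]
    rintro x hx1 hx2
    obtain ⟨j, -, rfl⟩ := Finset.mem_image.1 hx1
    obtain ⟨⟨j', k'⟩, hmem', heq⟩ := Finset.mem_image.1 hx2
    rw [Finset.mem_product] at hmem'
    have hA' := (Finset.mem_filter.1 hmem'.1).2
    have hB' := (Finset.mem_filter.1 hmem'.2).2
    have hdjk' : j' ≠ k' := by rintro rfl; exact absurd hB' (not_lt.2 hA'.le)
    have h1 := congrFun heq j'
    have h2 := congrFun heq k'
    simp only at h1 h2
    rw [ppt_apply_fst] at h1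
    rw [ppt_apply_snd (Ne.symm hdjk')] at h2
    have hj' : j' = j := by
      by_contra hc
      rw [mpt_apply_ne hc] at h1
      exact absurd h1 (ne_of_gt (hmem 0 j').1)
    have hk' : k' = j := by
      by_contra hc
      rw [mpt_apply_ne hc] at h2
      exact absurd h2 (ne_of_gt (hmem 1 k').1)
    exact hdjk' (hj'.trans hk'.symm)
  rw [Finset.card_union_of_disjoint hdisj, hcard1, hcard2]

lemma nat_lb (dd a : ℕ) (h1 : 1 ≤ a) (h2 : a ≤ dd / 2) :
    2 * dd - 1 ≤ dd + a * (dd - a) := by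
  obtain ⟨b, hb, hb1⟩ : ∃ b, dd = a + b ∧ 1 ≤ b := ⟨dd - a, by omega, by omega⟩
  subst hb
  rw [Nat.add_sub_cancel_left]
  obtain ⟨a', rfl⟩ := Nat.exists_eq_add_of_le h1
  obtain ⟨b', rfl⟩ := Nat.exists_eq_add_of_le hb1
  have key : (1 + a') + (1 + b') ≤ (1 + a') * (1 + b') + 1 := by
    calc (1 + a') + (1 + b') ≤ (1 + a') + (1 + b') + a' * b' := Nat.le_add_right _ _
      _ = (1 + a') * (1 + b') + 1 := by ring
  have h2' : 1 ≤ 2 * ((1 + a') + (1 + b')) := by omega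
  zify [h2']
  have key' : ((1:ℤ) + a') + (1 + b') ≤ (1 + a') * (1 + b') + 1 := by exact_mod_cast key
  linarith

lemma nat_ub2 (dd a m : ℕ) (h2 : a ≤ m) (h3 : 2 * m ≤ dd) :
    a * (dd - a) ≤ m * (dd - m) := by
  have ha : a ≤ dd := by omega
  have hm : m ≤ dd := by omega
  zify [ha, hm]
  have c1 : (0:ℤ) ≤ (m : ℤ) - (a : ℤ) := by omega
  have c2 : (0:ℤ) ≤ (dd : ℤ) - (m : ℤ) - (a : ℤ) := by omega
  nlinarith [mul_nonneg c1 c2]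

lemma nat_ub (dd a : ℕ) (h1 : 1 ≤ a) (h2 : a ≤ dd / 2) :
    dd + a * (dd - a) ≤ dd + (dd / 2) * ((dd + 1) / 2) := by
  rw [show (dd + 1) / 2 = dd - dd / 2 by omega]
  exact Nat.add_le_add_left (nat_ub2 dd a (dd / 2) h2 (by omega)) dd

end GenTwoAux

open GenTwoAux in
theorem generators_two_records (d : ℕ) (hd : 1 ≤ d) :
    (∀ r : Fin 2 → Fin d → ℝ,
      (∀ i j, r i j ∈ Set.Ioo (0:ℝ) 1) →
      (∀ j : Fin d, Function.Injective (fun i => r i j)) →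
      (∀ i i' : Fin 2, i ≠ i' → ¬ r i ≤ r i') →
      (∃ a : ℕ, 1 ≤ a ∧ a ≤ d / 2 ∧ (generators r).ncard = d + a * (d - a)) ∧
      2 * d - 1 ≤ (generators r).ncard ∧
      (generators r).ncard ≤ d + (d / 2) * ((d + 1) / 2)) ∧
    (∀ a : ℕ, 1 ≤ a → a ≤ d / 2 →
      ∃ r : Fin 2 → Fin d → ℝ,
        (∀ i j, r i j ∈ Set.Ioo (0:ℝ) 1) ∧
        (∀ j : Fin d, Function.Injective (fun i => r i j)) ∧
        (∀ i i' : Fin 2, i ≠ i' → ¬ r i ≤ r i') ∧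
        (generators r).ncard = d + a * (d - a)) := by
  have hfin2 : ∀ i : Fin 2, i = 0 ∨ i = 1 := by decide
  constructor
  · intro r hmem hinj hinc
    have hne : ∀ j, r 0 j ≠ r 1 j := by
      intro j h
      have h01 : (0 : Fin 2) = 1 := hinj j h
      exact absurd h01 (by decide)
    have hcard := gen_ncard hmem hne
    set A := Finset.univ.filter fun j : Fin d => r 0 j < r 1 j with hA
    set B := Finset.univ.filter fun k : Fin d => r 1 k < r 0 k with hB
    have hBc : B = Aᶜ := by
      ext j
      simp only [hA, hB, Finset.mem_compl, Finset.mem_filter, Finset.mem_univ, true_and,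
        not_lt]
      exact ⟨le_of_lt, fun h => h.lt_of_ne (Ne.symm (hne j))⟩
    have hcardB : B.card = d - A.card := by
      rw [hBc, Finset.card_compl, Fintype.card_fin]
    have hAne : A.Nonempty := by
      have h10 := hinc 1 0 (by decide)
      rw [Pi.le_def] at h10
      push_neg at h10
      obtain ⟨j, hj⟩ := h10
      exact ⟨j, by simp [hA, hj]⟩
    have hBne : B.Nonempty := by
      have h01 := hinc 0 1 (by decide)
      rw [Pi.le_def] at h01
      push_neg at h01
      obtain ⟨j, hj⟩ := h01
      exact ⟨j, by simp [hB, hj]⟩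
    have hA1 : 1 ≤ A.card := Finset.card_pos.2 hAne
    have hB1 : 1 ≤ B.card := Finset.card_pos.2 hBne
    have hAd : A.card ≤ d := by
      have := Finset.card_le_univ A
      simpa using this
    set a0 := A.card with ha0
    have hprod : (generators r).ncard = d + a0 * (d - a0) := by
      rw [hcard, hcardB]
    have hmain : ∃ a : ℕ, 1 ≤ a ∧ a ≤ d / 2 ∧
        (generators r).ncard = d + a * (d - a) := by
      refine ⟨min a0 (d - a0), by omega, by omega, ?_⟩
      rcases le_total a0 (d - a0) with h | h
      · rw [min_eq_left h, hprod]
      · rw [min_eq_right h, hprod, show d - (d - a0) = a0 by omega, Nat.mul_comm]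
    refine ⟨hmain, ?_, ?_⟩
    · obtain ⟨a, h1, h2, h3⟩ := hmain
      rw [h3]; exact nat_lb d a h1 h2
    · obtain ⟨a, h1, h2, h3⟩ := hmain
      rw [h3]; exact nat_ub d a h1 h2
  · intro a ha1 ha2
    have hd2 : 2 ≤ d := by omega
    have had : a < d := by omega
    set r : Fin 2 → Fin d → ℝ := fun i j =>
      if i = 0 then (if (j : ℕ) < a then (1/4 : ℝ) else 1/2)
      else (if (j : ℕ) < a then (1/2 : ℝ) else 1/4) with hr
    have hr0 : ∀ j : Fin d, r 0 j = if (j : ℕ) < a then (1/4 : ℝ) else 1/2 := by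
      intro j; simp [hr]
    have hr1 : ∀ j : Fin d, r 1 j = if (j : ℕ) < a then (1/2 : ℝ) else 1/4 := by
      intro j; simp [hr]
    have hmem : ∀ i j, r i j ∈ Set.Ioo (0:ℝ) 1 := by
      intro i j
      simp only [hr]
      split_ifs <;> norm_num
    have hne : ∀ j : Fin d, r 0 j ≠ r 1 j := by
      intro j
      rw [hr0, hr1]
      split_ifs <;> norm_num
    have hinj : ∀ j : Fin d, Function.Injective (fun i => r i j) := by
      intro j i i' h
      rcases hfin2 i with rfl | rfl <;> rcases hfin2 i' with rfl | rfl
      · rfl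
      · exact absurd h (hne j)
      · exact absurd h.symm (hne j)
      · rfl
    have hnot01 : ¬ r 0 ≤ r 1 := by
      intro hle
      have := hle ⟨a, had⟩
      rw [hr0, hr1] at this
      norm_num at this
    have hnot10 : ¬ r 1 ≤ r 0 := by
      intro hle
      have := hle ⟨0, by omega⟩
      rw [hr0, hr1] at this
      have h0a : (0 : ℕ) < a := ha1
      norm_num [h0a] at this
    have hinc : ∀ i i' : Fin 2, i ≠ i' → ¬ r i ≤ r i' := by
      intro i i' hii
      rcases hfin2 i with rfl | rfl <;> rcases hfin2 i' with rfl | rfl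
      · exact absurd rfl hii
      · exact hnot01
      · exact hnot10
      · exact absurd rfl hii
    have hAlt : ∀ j : Fin d, r 0 j < r 1 j ↔ (j : ℕ) < a := by
      intro j
      rw [hr0, hr1]
      split_ifs with h <;> simp [h] <;> norm_num
    have hBlt : ∀ j : Fin d, r 1 j < r 0 j ↔ ¬ (j : ℕ) < a := by
      intro j
      rw [hr0, hr1]
      split_ifs with h <;> simp [h] <;> norm_num
    have hfiltA : (Finset.univ.filter fun j : Fin d => r 0 j < r 1 j) =
        Finset.Iio (⟨a, had⟩ : Fin d) := by
      ext j
      simp [hAlt j, Fin.lt_def]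
    have hfiltB : (Finset.univ.filter fun j : Fin d => r 1 j < r 0 j) =
        (Finset.Iio (⟨a, had⟩ : Fin d))ᶜ := by
      ext j
      simp [hBlt j, Fin.lt_def]
    have hcA : (Finset.Iio (⟨a, had⟩ : Fin d)).card = a := by
      rw [Fin.card_Iio]
    refine ⟨r, hmem, hinj, hinc, ?_⟩
    rw [gen_ncard hmem hne, hfiltA, hfiltB, Finset.card_compl, Fintype.card_fin, hcA]
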